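/- Let φ ∈ A[δ,M] be an almost flow such that the map (s,t,b) ↦ φ_{t,s}(b) is jointly continuous on 𝕋²₊ × V, and assume ω and ϖ are continuous. Let K ≥ 0, a ∈ V, let (π_n) be a sequence of partitions of [0,T] with mesh(π_n) → 0, let y^n ∈ P_{π_n}[φ,a,K] for each n, and let ŷ^n: [0,T] → V denote the piecewise-linear interpolation of y^n. If ŷ^n converges uniformly on [0,T] to a path y, then y ∈ P[φ,a,K]. -/

import Mathlib

noncomputable section

/-- A control on the simplex of `[0,T]`: vanishing on the diagonal, nonnegative
and super-additive. -/
def IsControl (T : ℝ) (ω : ℝ → ℝ → ℝ) : Prop :=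
  (∀ s t, 0 ≤ s → s ≤ t → t ≤ T → 0 ≤ ω s t) ∧
  (∀ s, 0 ≤ s → s ≤ T → ω s s = 0) ∧
  (∀ r s t, 0 ≤ r → r ≤ s → s ≤ t → t ≤ T → ω r s + ω s t ≤ ω r t)

/-- The global hypotheses on the data `T`, `κ`, `δ`, `ϖ`. -/
def GoodParams (T κ : ℝ) (δ ϖ : ℝ → ℝ) : Prop :=
  0 < T ∧ 0 < κ ∧ κ < 1 ∧
  (∀ x y, 0 ≤ x → x ≤ y → δ x ≤ δ y) ∧
  (∀ x y, 0 ≤ x → x ≤ y → ϖ x ≤ ϖ y) ∧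
  δ 0 = 0 ∧ ϖ 0 = 0 ∧
  (∀ x, 0 ≤ x → 2 * ϖ (x / 2) ≤ κ * ϖ x) ∧
  κ + 2 * δ T < 1

variable {V : Type*} [NormedAddCommGroup V] [NormedSpace ℝ V]

/-- `χ` is of class `𝒪` with constant `C`:
`osc (χ t s, L * ϖ (ω r s)) ≤ C * δT * (1 + L) * ϖ (ω r t)`. -/
def ClassO (T : ℝ) (ω : ℝ → ℝ → ℝ) (ϖ : ℝ → ℝ) (δT C : ℝ)
    (χ : ℝ → ℝ → V → V) : Prop :=
  ∀ r s t, 0 ≤ r → r ≤ s → s ≤ t → t ≤ T → ∀ L, 0 ≤ L → ∀ a b : V,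
    ‖a - b‖ ≤ L * ϖ (ω r s) →
      ‖χ t s a - χ t s b‖ ≤ C * δT * (1 + L) * ϖ (ω r t)

/-- An almost flow `φ ∈ 𝒜[δ, M]`. -/
def AlmostFlow (T : ℝ) (ω : ℝ → ℝ → ℝ) (δ ϖ : ℝ → ℝ) (M : ℝ)
    (φ : ℝ → ℝ → V → V) : Prop :=
  (∀ s t, 0 ≤ s → s ≤ t → t ≤ T → Continuous (φ t s)) ∧
  ClassO T ω ϖ (δ T) 1 (fun t s a => φ t s a - a) ∧
  (∀ s t, 0 ≤ s → s ≤ t → t ≤ T → ∀ a : V, ‖φ t s a - a‖ ≤ δ (t - s)) ∧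
  (∀ r s t, 0 ≤ r → r ≤ s → s ≤ t → t ≤ T → ∀ a : V,
    ‖φ t s (φ s r a) - φ t r a‖ ≤ M * ϖ (ω r t))

/-- A partition `0 = t 0 < t 1 < ⋯ < t n = T` of `[0, T]`. -/
def IsPartition (T : ℝ) (n : ℕ) (t : ℕ → ℝ) : Prop :=
  t 0 = 0 ∧ t n = T ∧ ∀ k, k < n → t k < t (k + 1)

/-- `y ∈ 𝒫_π[φ, a, K]`: a discrete D-solution on the partition `t` with constant `K`. -/
def DiscreteDSol (ϖ : ℝ → ℝ) (ω : ℝ → ℝ → ℝ) (φ : ℝ → ℝ → V → V)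
    (n : ℕ) (t : ℕ → ℝ) (a : V) (K : ℝ) (y : ℕ → V) : Prop :=
  y 0 = a ∧ ∀ i j, i ≤ j → j ≤ n →
    ‖y j - φ (t j) (t i) (y i)‖ ≤ K * ϖ (ω (t i) (t j))

/-- The numerical scheme of `φ` on the partition `t` started at `a`. -/
def NumScheme (φ : ℝ → ℝ → V → V) (n : ℕ) (t : ℕ → ℝ) (a : V) (y : ℕ → V) : Prop :=
  y 0 = a ∧ ∀ k, k < n → y (k + 1) = φ (t (k + 1)) (t k) (y k)

/-- `y ∈ 𝒫[φ, a, K]`: a (continuous-time) D-solution with constant `K`. -/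
def DSol (T : ℝ) (ϖ : ℝ → ℝ) (ω : ℝ → ℝ → ℝ) (φ : ℝ → ℝ → V → V)
    (a : V) (K : ℝ) (y : ℝ → V) : Prop :=
  ContinuousOn y (Set.Icc 0 T) ∧ y 0 = a ∧
  ∀ s t, 0 ≤ s → s ≤ t → t ≤ T → ‖y t - φ t s (y s)‖ ≤ K * ϖ (ω s t)

/-- The discrete functional `Φ^π_{i,j}(y) = ∑_{k=i}^{j-1} φ̂_{t_{k+1}, t_k}(y_k)`. -/
def PhiSum (φ : ℝ → ℝ → V → V) (t : ℕ → ℝ) (y : ℕ → V) (i j : ℕ) : V :=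
  ∑ k ∈ Finset.Ico i j, (φ (t (k + 1)) (t k) (y k) - y k)

/-- A stable almost flow, with Lipschitz-ratio bound `dφLip` for `dφ` and
4-point control data `φCheck`, `φStar`. -/
def StableAlmostFlow (T : ℝ) (ω : ℝ → ℝ → ℝ) (δ ϖ : ℝ → ℝ) (M : ℝ)
    (φ : ℝ → ℝ → V → V) (dφLip : ℝ) (φCheck : ℝ → ℝ → ℝ → ℝ) (φStar : ℝ → ℝ) :
    Prop :=
  AlmostFlow T ω δ ϖ M φ ∧
  (∀ s t, 0 ≤ s → s ≤ t → t ≤ T → ∀ a b : V,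
    ‖(φ t s a - a) - (φ t s b - b)‖ ≤ δ T * ‖a - b‖) ∧
  (∀ r s t, 0 ≤ r → r ≤ s → s ≤ t → t ≤ T → ∀ a b : V,
    ‖(φ t s (φ s r a) - φ t r a) - (φ t s (φ s r b) - φ t r b)‖ ≤
      dφLip * ϖ (ω r t) * ‖a - b‖) ∧
  (∀ s t, 0 ≤ s → s ≤ t → t ≤ T → ∀ a b c d : V,
    ‖φ t s a - φ t s b - φ t s c + φ t s d‖ ≤
      φCheck t s (max ‖a - b‖ ‖c - d‖) * max ‖a - c‖ ‖b - d‖ +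
        (1 + δ T) * ‖a - b - c + d‖) ∧
  (∀ α, 0 ≤ α → ∀ r s t, 0 ≤ r → r ≤ s → s ≤ t → t ≤ T →
    φCheck t s (α * ϖ (ω r s)) ≤ φStar α * ϖ (ω r t))

/-- `d_𝒜(φ, ψ) ≤ ε`: all three components of the distance `d_𝒜` are at most `ε`. -/
def dAle (T : ℝ) (ω : ℝ → ℝ → ℝ) (δ ϖ : ℝ → ℝ)
    (φ ψ : ℝ → ℝ → V → V) (ε : ℝ) : Prop :=
  (∀ s t, 0 ≤ s → s ≤ t → t ≤ T → ∀ a : V, ‖φ t s a - ψ t s a‖ ≤ ε) ∧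
  ClassO T ω ϖ (δ T) ε (fun t s a => φ t s a - ψ t s a) ∧
  (∀ r s t, 0 ≤ r → r ≤ s → s ≤ t → t ≤ T → ∀ a : V,
    ‖(φ t s (φ s r a) - φ t r a) - (ψ t s (ψ s r a) - ψ t r a)‖ ≤ ε * ϖ (ω r t))

/-- Convergence lemma: if discrete D-solutions `y^m ∈ 𝒫_{π_m}[φ,a,K]`
on partitions with mesh going to `0` have piecewise-linear interpolations converging
uniformly to a path `z`, then `z ∈ 𝒫[φ,a,K]`. -/
private lemma contOn_union_closed {X Y : Type*} [TopologicalSpace X] [TopologicalSpace Y]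
    {f : X → Y} {s t : Set X} (hs : IsClosed s) (ht : IsClosed t)
    (hfs : ContinuousOn f s) (hft : ContinuousOn f t) : ContinuousOn f (s ∪ t) := by
  intro x hx
  have h1 : ContinuousWithinAt f s x := by
    by_cases h : x ∈ s
    · exact hfs x h
    · exact continuousWithinAt_of_notMem_closure (by rwa [hs.closure_eq])
  have h2 : ContinuousWithinAt f t x := by
    by_cases h : x ∈ t
    · exact hft x h
    · exact continuousWithinAt_of_notMem_closure (by rwa [ht.closure_eq])
  exact h1.union h2


set_option maxHeartbeats 1000000 in
theorem stmt_3 {V : Type*} [NormedAddCommGroup V] [NormedSpace ℝ V]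
    (T κ M : ℝ) (δ ϖ : ℝ → ℝ) (ω : ℝ → ℝ → ℝ)
    (hparams : GoodParams T κ δ ϖ) (hω : IsControl T ω) (hM : 0 ≤ M)
    (φ : ℝ → ℝ → V → V) (hφ : AlmostFlow T ω δ ϖ M φ)
    (hφcont : ContinuousOn (fun p : ℝ × ℝ × V => φ p.2.1 p.1 p.2.2)
      {p : ℝ × ℝ × V | 0 ≤ p.1 ∧ p.1 ≤ p.2.1 ∧ p.2.1 ≤ T})
    (hωcont : ContinuousOn (fun p : ℝ × ℝ => ω p.1 p.2)
      {p : ℝ × ℝ | 0 ≤ p.1 ∧ p.1 ≤ p.2 ∧ p.2 ≤ T})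
    (hϖcont : ContinuousOn ϖ (Set.Ici 0))
    (K : ℝ) (hK : 0 ≤ K) (a : V)
    (N : ℕ → ℕ) (t : ℕ → ℕ → ℝ) (hpart : ∀ m, IsPartition T (N m) (t m))
    (hmesh : ∀ ε > (0:ℝ), ∃ m₀, ∀ m ≥ m₀, ∀ k < N m, t m (k + 1) - t m k ≤ ε)
    (y : ℕ → ℕ → V) (hy : ∀ m, DiscreteDSol ϖ ω φ (N m) (t m) a K (y m))
    (Y : ℕ → ℝ → V)
    (hY : ∀ m, ∀ k < N m, ∀ u ∈ Set.Icc (t m k) (t m (k + 1)),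
      Y m u = y m k + ((u - t m k) / (t m (k + 1) - t m k)) • (y m (k + 1) - y m k))
    (z : ℝ → V)
    (hconv : ∀ ε > (0:ℝ), ∃ m₀, ∀ m ≥ m₀, ∀ u ∈ Set.Icc (0:ℝ) T, ‖Y m u - z u‖ ≤ ε) :
    DSol T ϖ ω φ a K z := by
  classical
  obtain ⟨hT, hκ, hκ1, hδmono, hϖmono, hδ0, hϖ0, hϖhalf, hκδ⟩ := hparams
  obtain ⟨hωnn, hωdiag, hωsup⟩ := hω
  -- every partition has at least one step
  have hN : ∀ m, 1 ≤ N m := by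
    intro m
    by_contra h
    push_neg at h
    interval_cases hNm : N m
    · have h1 := (hpart m).1
      have h2 := (hpart m).2.1
      rw [hNm] at h2
      rw [h1] at h2
      linarith
  -- monotonicity of partition points
  have tmono : ∀ m, ∀ i j, i ≤ j → j ≤ N m → t m i ≤ t m j := by
    intro m i j hij hjN
    induction j with
    | zero => simp [Nat.le_zero.mp hij]
    | succ j ih =>
      rcases Nat.lt_or_ge i (j + 1) with h | h
      · have h1 : t m i ≤ t m j := ih (Nat.lt_succ_iff.mp h) (le_trans (Nat.le_succ j) hjN)
        exact le_trans h1 (le_of_lt ((hpart m).2.2 j (Nat.lt_of_succ_le hjN)))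
      · have : i = j + 1 := le_antisymm hij h
        rw [this]
  -- partition points lie in [0, T]
  have tmem : ∀ m, ∀ k, k ≤ N m → t m k ∈ Set.Icc (0:ℝ) T := by
    intro m k hk
    constructor
    · rw [← (hpart m).1]; exact tmono m 0 k (Nat.zero_le k) hk
    · rw [← (hpart m).2.1]; exact tmono m k (N m) hk le_rfl
  -- Y agrees with y at partition points
  have Ypt : ∀ m, ∀ k, k ≤ N m → Y m (t m k) = y m k := by
    intro m k hk
    rcases lt_or_eq_of_le hk with h | h
    · have h1 := hY m k h (t m k) ⟨le_rfl, le_of_lt ((hpart m).2.2 k h)⟩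
      simp [h1]
    · obtain ⟨j, hj⟩ : ∃ j, N m = j + 1 := ⟨N m - 1, (Nat.succ_pred_eq_of_pos (hN m)).symm⟩
      subst h
      have hjlt : j < N m := by omega
      have hlt : t m j < t m (j + 1) := (hpart m).2.2 j hjlt
      have hne : t m (j + 1) - t m j ≠ 0 := sub_ne_zero.mpr (ne_of_gt hlt)
      have h1 := hY m j hjlt (t m (j + 1)) ⟨le_of_lt hlt, le_rfl⟩
      rw [hj, h1, div_self hne, one_smul]
      abel
  -- z 0 = a
  have hz0 : z 0 = a := by
    have key : ∀ ε > (0:ℝ), ‖z 0 - a‖ ≤ 0 + ε := by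
      intro ε hε
      obtain ⟨m₀, hm₀⟩ := hconv ε hε
      have h1 := hm₀ m₀ le_rfl 0 ⟨le_rfl, le_of_lt hT⟩
      have h2 : Y m₀ 0 = a := by
        have h3 : (0:ℝ) = t m₀ 0 := ((hpart m₀).1).symm
        rw [h3, Ypt m₀ 0 (Nat.zero_le _)]
        exact (hy m₀).1
      rw [h2] at h1
      rw [norm_sub_rev]
      linarith
    have h4 : ‖z 0 - a‖ ≤ 0 := le_of_forall_pos_le_add key
    have h5 : z 0 - a = 0 := norm_le_zero_iff.mp h4
    exact sub_eq_zero.mp h5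
  -- continuity of each Y m on [0, T]
  have hYcont : ∀ m, ContinuousOn (Y m) (Set.Icc 0 T) := by
    intro m
    have key : ∀ k, k ≤ N m → ContinuousOn (Y m) (Set.Icc (t m 0) (t m k)) := by
      intro k hk
      induction k with
      | zero => simp [continuousOn_singleton]
      | succ k ih =>
        have hk' : k ≤ N m := le_trans (Nat.le_succ k) hk
        have hklt : k < N m := Nat.lt_of_succ_le hk
        have h1 : ContinuousOn (Y m) (Set.Icc (t m k) (t m (k + 1))) := by
          have hg : ContinuousOn
              (fun u => y m k + ((u - t m k) / (t m (k + 1) - t m k)) • (y m (k + 1) - y m k))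
              (Set.Icc (t m k) (t m (k + 1))) := by
            apply Continuous.continuousOn
            exact continuous_const.add
              (((continuous_id.sub continuous_const).div_const _).smul continuous_const)
          exact ContinuousOn.congr hg (fun u hu => hY m k hklt u hu)
        have h2 := contOn_union_closed isClosed_Icc isClosed_Icc (ih hk') h1
        rwa [Set.Icc_union_Icc_eq_Icc (tmono m 0 k (Nat.zero_le _) hk')
          (le_of_lt ((hpart m).2.2 k hklt))] at h2
    have h3 := key (N m) le_rfl
    rwa [(hpart m).1, (hpart m).2.1] at h3
  -- continuity of z on [0, T]
  have hzcont : ContinuousOn z (Set.Icc 0 T) := by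
    have htu : TendstoUniformlyOn Y z Filter.atTop (Set.Icc 0 T) := by
      rw [Metric.tendstoUniformlyOn_iff]
      intro ε hε
      obtain ⟨m₀, hm₀⟩ := hconv (ε / 2) (by linarith)
      refine Filter.eventually_atTop.mpr ⟨m₀, fun m hm u hu => ?_⟩
      have h1 := hm₀ m hm u hu
      have h2 : dist (z u) (Y m u) = ‖Y m u - z u‖ := by
        rw [dist_eq_norm, norm_sub_rev]
      rw [h2]
      linarith
    exact htu.continuousOn (Filter.eventually_atTop.mpr ⟨0, fun m _ => hYcont m⟩).frequently
  refine ⟨hzcont, hz0, ?_⟩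
  intro s u hs hsu huT
  refine le_of_forall_pos_le_add ?_
  intro ε hε
  -- continuity modulus for φ at (s, u, z s)
  have hp₀ : ((s, u, z s) : ℝ × ℝ × V) ∈ {p : ℝ × ℝ × V | 0 ≤ p.1 ∧ p.1 ≤ p.2.1 ∧ p.2.1 ≤ T} :=
    ⟨hs, hsu, huT⟩
  have hφc := hφcont _ hp₀
  rw [Metric.continuousWithinAt_iff] at hφc
  obtain ⟨η₁, hη₁, hφc⟩ := hφc (ε / 3) (by linarith)
  -- continuity modulus for ϖ ∘ ω at (s, u)
  have hq₀ : ((s, u) : ℝ × ℝ) ∈ {p : ℝ × ℝ | 0 ≤ p.1 ∧ p.1 ≤ p.2 ∧ p.2 ≤ T} := ⟨hs, hsu, huT⟩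
  have hmapB : Set.MapsTo (fun p : ℝ × ℝ => ω p.1 p.2)
      {p : ℝ × ℝ | 0 ≤ p.1 ∧ p.1 ≤ p.2 ∧ p.2 ≤ T} (Set.Ici (0:ℝ)) :=
    fun p hp => hωnn p.1 p.2 hp.1 hp.2.1 hp.2.2
  have hϖω : ContinuousWithinAt (ϖ ∘ (fun p : ℝ × ℝ => ω p.1 p.2))
      {p : ℝ × ℝ | 0 ≤ p.1 ∧ p.1 ≤ p.2 ∧ p.2 ≤ T} (s, u) :=
    ContinuousWithinAt.comp (hϖcont _ (hmapB hq₀)) (hωcont _ hq₀) hmapB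
  rw [Metric.continuousWithinAt_iff] at hϖω
  obtain ⟨η₂, hη₂, hϖω⟩ := hϖω (ε / (3 * (K + 1))) (by positivity)
  -- continuity moduli for z at s and at u
  have hzs := hzcont s ⟨hs, le_trans hsu huT⟩
  rw [Metric.continuousWithinAt_iff] at hzs
  obtain ⟨η₃, hη₃, hzs⟩ := hzs (η₁ / 2) (by linarith)
  have hzu := hzcont u ⟨le_trans hs hsu, huT⟩
  rw [Metric.continuousWithinAt_iff] at hzu
  obtain ⟨η₄, hη₄, hzu⟩ := hzu (ε / 6) (by linarith)
  -- choose parameters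
  set e : ℝ := min (ε / 6) (η₁ / 4) with hedef
  have he : 0 < e := lt_min (by linarith) (by linarith)
  set θ : ℝ := min (min (η₁ / 2) (η₂ / 2)) (min (η₃ / 2) (η₄ / 2)) with hθdef
  have hθpos : 0 < θ := lt_min (lt_min (by linarith) (by linarith)) (lt_min (by linarith) (by linarith))
  have hθ1 : θ ≤ η₁ / 2 := le_trans (min_le_left _ _) (min_le_left _ _)
  have hθ2 : θ ≤ η₂ / 2 := le_trans (min_le_left _ _) (min_le_right _ _)
  have hθ3 : θ ≤ η₃ / 2 := le_trans (min_le_right _ _) (min_le_left _ _)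
  have hθ4 : θ ≤ η₄ / 2 := le_trans (min_le_right _ _) (min_le_right _ _)
  obtain ⟨m₁, hm₁⟩ := hmesh θ hθpos
  obtain ⟨m₂, hm₂⟩ := hconv e he
  set m : ℕ := max m₁ m₂ with hmdef
  -- nearest partition point to the left
  have hstep : ∀ v, 0 ≤ v → v ≤ T →
      t m (Nat.findGreatest (fun k => t m k ≤ v) (N m)) ≤ v ∧
      v - t m (Nat.findGreatest (fun k => t m k ≤ v) (N m)) ≤ θ := by
    intro v hv0 hvT
    have hiN : Nat.findGreatest (fun k => t m k ≤ v) (N m) ≤ N m :=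
      Nat.findGreatest_le (N m)
    have hP0 : t m 0 ≤ v := by rw [(hpart m).1]; exact hv0
    have hiv : t m (Nat.findGreatest (fun k => t m k ≤ v) (N m)) ≤ v :=
      Nat.findGreatest_spec (P := fun k => t m k ≤ v) (Nat.zero_le _) hP0
    refine ⟨hiv, ?_⟩
    rcases lt_or_eq_of_le hiN with h | h
    · have hgt : ¬ t m (Nat.findGreatest (fun k => t m k ≤ v) (N m) + 1) ≤ v :=
        Nat.findGreatest_is_greatest (P := fun k => t m k ≤ v)
          (Nat.lt_succ_self _) (Nat.succ_le_of_lt h)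
      push_neg at hgt
      have hm' : t m (Nat.findGreatest (fun k => t m k ≤ v) (N m) + 1) -
          t m (Nat.findGreatest (fun k => t m k ≤ v) (N m)) ≤ θ :=
        hm₁ m (le_max_left _ _) _ h
      linarith
    · have hT' : t m (Nat.findGreatest (fun k => t m k ≤ v) (N m)) = T := by
        rw [h, (hpart m).2.1]
      have : v = t m (Nat.findGreatest (fun k => t m k ≤ v) (N m)) :=
        le_antisymm (hT' ▸ hvT) hiv
      linarith
  obtain ⟨his, hsc⟩ := hstep s hs (le_trans hsu huT)
  obtain ⟨hju, huc⟩ := hstep u (le_trans hs hsu) huT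
  have hiN : Nat.findGreatest (fun k => t m k ≤ s) (N m) ≤ N m := Nat.findGreatest_le (N m)
  have hjN : Nat.findGreatest (fun k => t m k ≤ u) (N m) ≤ N m := Nat.findGreatest_le (N m)
  have hij : Nat.findGreatest (fun k => t m k ≤ s) (N m) ≤
      Nat.findGreatest (fun k => t m k ≤ u) (N m) :=
    Nat.le_findGreatest (P := fun k => t m k ≤ u) hiN (le_trans his hsu)
  set i : ℕ := Nat.findGreatest (fun k => t m k ≤ s) (N m) with hidef
  set j : ℕ := Nat.findGreatest (fun k => t m k ≤ u) (N m) with hjdef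
  have htij : t m i ≤ t m j := tmono m i j hij hjN
  have hiIcc := tmem m i hiN
  have hjIcc := tmem m j hjN
  -- discrete D-solution bound
  have hdisc := (hy m).2 i j hij hjN
  -- uniform approximation at partition points
  have hyi : ‖y m i - z (t m i)‖ ≤ e := by
    have h1 := hm₂ m (le_max_right _ _) (t m i) hiIcc
    rwa [Ypt m i hiN] at h1
  have hyj : ‖y m j - z (t m j)‖ ≤ e := by
    have h1 := hm₂ m (le_max_right _ _) (t m j) hjIcc
    rwa [Ypt m j hjN] at h1
  -- z is close at the partition points
  have hdi : dist (t m i) s < η₃ := by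
    rw [Real.dist_eq, abs_of_nonpos (by linarith)]
    linarith
  have hdj : dist (t m j) u < η₄ := by
    rw [Real.dist_eq, abs_of_nonpos (by linarith)]
    linarith
  have hzi : ‖z (t m i) - z s‖ < η₁ / 2 := by
    have h1 := hzs hiIcc hdi
    rwa [dist_eq_norm] at h1
  have hzj : ‖z (t m j) - z u‖ < ε / 6 := by
    have h1 := hzu hjIcc hdj
    rwa [dist_eq_norm] at h1
  -- φ closeness
  have hAm : ((t m i, t m j, y m i) : ℝ × ℝ × V) ∈
      {p : ℝ × ℝ × V | 0 ≤ p.1 ∧ p.1 ≤ p.2.1 ∧ p.2.1 ≤ T} := ⟨hiIcc.1, htij, hjIcc.2⟩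
  have hdistA : dist ((t m i, t m j, y m i) : ℝ × ℝ × V) (s, u, z s) < η₁ := by
    rw [Prod.dist_eq, Prod.dist_eq]
    have h1 : dist (t m i) s < η₁ := by
      rw [Real.dist_eq, abs_of_nonpos (by linarith)]; linarith
    have h2 : dist (t m j) u < η₁ := by
      rw [Real.dist_eq, abs_of_nonpos (by linarith)]; linarith
    have h3 : dist (y m i) (z s) < η₁ := by
      calc dist (y m i) (z s) ≤ dist (y m i) (z (t m i)) + dist (z (t m i)) (z s) :=
            dist_triangle _ _ _
        _ < η₁ := by
            rw [dist_eq_norm, dist_eq_norm]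
            have h4 : e ≤ η₁ / 4 := min_le_right _ _
            linarith
    exact max_lt h1 (max_lt h2 h3)
  have hφclose : dist (φ (t m j) (t m i) (y m i)) (φ u s (z s)) < ε / 3 := hφc hAm hdistA
  -- ϖ ∘ ω closeness
  have hBm : ((t m i, t m j) : ℝ × ℝ) ∈ {p : ℝ × ℝ | 0 ≤ p.1 ∧ p.1 ≤ p.2 ∧ p.2 ≤ T} :=
    ⟨hiIcc.1, htij, hjIcc.2⟩
  have hdistB : dist ((t m i, t m j) : ℝ × ℝ) (s, u) < η₂ := by
    rw [Prod.dist_eq]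
    have h1 : dist (t m i) s < η₂ := by
      rw [Real.dist_eq, abs_of_nonpos (by linarith)]; linarith
    have h2 : dist (t m j) u < η₂ := by
      rw [Real.dist_eq, abs_of_nonpos (by linarith)]; linarith
    exact max_lt h1 h2
  have hϖclose : ϖ (ω (t m i) (t m j)) ≤ ϖ (ω s u) + ε / (3 * (K + 1)) := by
    have h1 := hϖω hBm hdistB
    simp only [Function.comp] at h1
    rw [Real.dist_eq] at h1
    have h2 := abs_lt.mp h1
    linarith [h2.1, h2.2]
  -- assemble
  have hmid : ‖y m j - φ (t m j) (t m i) (y m i)‖ ≤ K * ϖ (ω s u) + K * (ε / (3 * (K + 1))) := by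
    calc ‖y m j - φ (t m j) (t m i) (y m i)‖ ≤ K * ϖ (ω (t m i) (t m j)) := hdisc
      _ ≤ K * (ϖ (ω s u) + ε / (3 * (K + 1))) := mul_le_mul_of_nonneg_left hϖclose hK
      _ = K * ϖ (ω s u) + K * (ε / (3 * (K + 1))) := by ring
  have hKe : K * (ε / (3 * (K + 1))) ≤ ε / 3 := by
    rw [mul_comm, div_mul_eq_mul_div, div_le_div_iff₀ (by positivity) (by norm_num)]
    nlinarith
  have htri : dist (z u) (φ u s (z s)) ≤
      dist (z u) (z (t m j)) + dist (z (t m j)) (y m j) +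
        dist (y m j) (φ (t m j) (t m i) (y m i)) + dist (φ (t m j) (t m i) (y m i)) (φ u s (z s)) := by
    calc dist (z u) (φ u s (z s)) ≤ dist (z u) (y m j) +
          dist (y m j) (φ (t m j) (t m i) (y m i)) + dist (φ (t m j) (t m i) (y m i)) (φ u s (z s)) :=
        dist_triangle4 _ _ _ _
      _ ≤ _ := by
          have h1 : dist (z u) (y m j) ≤ dist (z u) (z (t m j)) + dist (z (t m j)) (y m j) :=
            dist_triangle _ _ _
          linarith
  have h1 : dist (z u) (z (t m j)) ≤ ε / 6 := by
    rw [dist_comm, dist_eq_norm]; linarith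
  have h2 : dist (z (t m j)) (y m j) ≤ ε / 6 := by
    rw [dist_comm, dist_eq_norm]
    exact le_trans hyj (min_le_left _ _)
  have h3 : dist (y m j) (φ (t m j) (t m i) (y m i)) ≤ K * ϖ (ω s u) + ε / 3 := by
    rw [dist_eq_norm]; linarith
  have hfinal : dist (z u) (φ u s (z s)) ≤ K * ϖ (ω s u) + ε := by
    have := dist_nonneg (x := z u) (y := φ u s (z s))
    linarith
  rw [← dist_eq_norm]
  exact hfinal
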